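/- Under g-bit rounding towards zero of a unit ℓ2-norm nonnegative vector α, the trace distance between the normalized states satisfies √(1 - |⟨α|A⟩/‖A‖₂|²) ≤ 2^{(1-g)/2} √(‖α‖₁). -/

import Mathlib

open Finset Real

/-- trace distance between |α⟩ and the g-bit rounded state |A⟩ is at most
    2^{(1-g)/2} √(‖α‖₁). -/
theorem stmt_1 (N g : ℕ) (hN : 0 < N) (hg : 0 < g)
    (α A : Fin N → ℝ)
    (hα_nonneg : ∀ i, 0 ≤ α i)
    (hα_norm : ∑ i, (α i) ^ 2 = 1)
    (hA : ∀ i, A i = ⌊(2 : ℝ) ^ g * α i⌋ / 2 ^ g)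
    (hA_pos : 0 < Real.sqrt (∑ i, (A i) ^ 2))
    (hsmall : 2 * ((2 : ℝ) ^ g)⁻¹ * ∑ i, α i ≤ 1) :
    Real.sqrt (1 - ((∑ i, α i * A i) / Real.sqrt (∑ i, (A i) ^ 2)) ^ 2) ≤
      (2 : ℝ) ^ (((1 : ℝ) - g) / 2) * Real.sqrt (∑ i, α i) := by
  have h2g : (0:ℝ) < 2 ^ g := by positivity
  have hA0 : ∀ i, 0 ≤ A i := by
    intro i
    rw [hA i]
    have h : (0:ℤ) ≤ ⌊(2:ℝ)^g * α i⌋ := Int.floor_nonneg.mpr (mul_nonneg h2g.le (hα_nonneg i))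
    have h' : (0:ℝ) ≤ (⌊(2:ℝ)^g * α i⌋ : ℝ) := by exact_mod_cast h
    exact div_nonneg h' h2g.le
  have hAle : ∀ i, A i ≤ α i := by
    intro i
    rw [hA i, div_le_iff₀ h2g]
    have := Int.floor_le ((2:ℝ)^g * α i)
    linarith [this, mul_comm (α i) ((2:ℝ)^g)]
  have hεle : ∀ i, α i - A i ≤ ((2:ℝ)^g)⁻¹ := by
    intro i
    rw [hA i]
    have h1 := Int.lt_floor_add_one ((2:ℝ)^g * α i)
    rw [sub_le_iff_le_add, inv_eq_one_div, ← add_div, le_div_iff₀ h2g]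
    nlinarith
  have hT0 : 0 < ∑ i, (A i)^2 := Real.sqrt_pos.mp hA_pos
  have hST : ∑ i, (A i)^2 ≤ ∑ i, α i * A i :=
    Finset.sum_le_sum fun i _ => by nlinarith [hA0 i, hAle i]
  have hS0 : 0 ≤ ∑ i, α i * A i := le_trans hT0.le hST
  have hsq : ((∑ i, α i * A i) / Real.sqrt (∑ i, (A i)^2)) ^ 2
      = (∑ i, α i * A i)^2 / (∑ i, (A i)^2) := by
    rw [div_pow, Real.sq_sqrt hT0.le]
  have hlow : ∑ i, (A i)^2 ≤ (∑ i, α i * A i)^2 / (∑ i, (A i)^2) := by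
    rw [le_div_iff₀ hT0]
    nlinarith
  have h4 : 1 - ∑ i, (A i)^2 ≤ 2 * ((2:ℝ)^g)⁻¹ * ∑ i, α i := by
    rw [← hα_norm, ← Finset.sum_sub_distrib, Finset.mul_sum]
    refine Finset.sum_le_sum fun i _ => ?_
    have h1 := hεle i
    have h2 := hA0 i
    have h3 := hAle i
    have h5 := hα_nonneg i
    have h6 : (0:ℝ) ≤ ((2:ℝ)^g)⁻¹ := by positivity
    nlinarith
  have hα1 : (0:ℝ) ≤ ∑ i, α i := Finset.sum_nonneg fun i _ => hα_nonneg i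
  calc Real.sqrt (1 - ((∑ i, α i * A i) / Real.sqrt (∑ i, (A i)^2)) ^ 2)
      ≤ Real.sqrt (2 * ((2:ℝ)^g)⁻¹ * ∑ i, α i) := by
        apply Real.sqrt_le_sqrt
        rw [hsq]
        linarith
    _ = (2 : ℝ) ^ (((1 : ℝ) - g) / 2) * Real.sqrt (∑ i, α i) := by
        rw [Real.sqrt_mul (by positivity)]
        congr 1
        rw [show (2:ℝ) * ((2:ℝ)^g)⁻¹ = (2:ℝ) ^ ((1:ℝ) - (g:ℝ)) by
          rw [Real.rpow_sub two_pos, Real.rpow_one, Real.rpow_natCast, div_eq_mul_inv]]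
        rw [Real.sqrt_eq_rpow, ← Real.rpow_mul (by norm_num : (0:ℝ) ≤ 2)]
        congr 1
        ring
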